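/- For the expression E = ExtDist(a*b* + b*a*, b*a*b*, a*b*a*) over the LinComb(ℕ) support, the derivated terms with respect to powers of a are pairwise distinct: for every n ≥ 1, d_{aⁿ}(E) = ExtDist(a*b* + a*, a*b*, a*b*a* + n ⊙ a*) as a linear-combination expression, hence the set of derivated terms of E is infinite. -/

import Mathlib

/-- Monadic expressions over an alphabet `A` with scalars in `K`. -/
inductive MExp (A K : Type) : Type
  | sym : A → MExp A K
  | eps : MExp A K
  | empty : MExp A K
  | plus : MExp A K → MExp A K → MExp A K
  | times : MExp A K → MExp A K → MExp A K
  | star : MExp A K → MExp A K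
  | lact : K → MExp A K → MExp A K
  | ract : MExp A K → K → MExp A K
  | fn : (n : ℕ) → ((Fin n → K) → K) → (Fin n → MExp A K) → MExp A K

variable {A : Type}

/-- Cauchy product of series. -/
def cauchy (S₁ S₂ : List A → ℕ) : List A → ℕ :=
  fun w => ∑ i ∈ Finset.range (w.length + 1), S₁ (w.take i) * S₂ (w.drop i)

/-- Star of a series: sum over factorizations into nonempty factors. -/
def starSeries (S : List A → ℕ) : List A → ℕ
  | [] => 1
  | w => ∑ c : Composition w.length, ((w.splitWrtComposition c).map S).prod

/-- The ℕ-series associated with an expression. -/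
def MExp.series [DecidableEq A] : MExp A ℕ → List A → ℕ
  | .sym a, w => if w = [a] then 1 else 0
  | .eps, w => if w = [] then 1 else 0
  | .empty, _ => 0
  | .plus e₁ e₂, w => e₁.series w + e₂.series w
  | .times e₁ e₂, w => cauchy e₁.series e₂.series w
  | .star e, w => starSeries e.series w
  | .lact k e, w => k * e.series w
  | .ract e k, w => e.series w * k
  | .fn _ f es, w => f (fun i => (es i).series w)

/-- The nullability value over ℕ. -/
def MExp.null : MExp A ℕ → ℕ
  | .sym _ => 0
  | .eps => 1
  | .empty => 0
  | .plus e₁ e₂ => e₁.null + e₂.null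
  | .times e₁ e₂ => e₁.null * e₂.null
  | .star _ => 1
  | .lact k e => k * e.null
  | .ract e k => e.null * k
  | .fn _ f es => f (fun i => (es i).null)

/-- `toExp` of the `LinComb(ℕ)` support: `(k₁,E₁) ⊞ ⋯ ⊞ (kₙ,Eₙ) ↦ k₁⊙E₁ + ⋯ + kₙ⊙Eₙ`. -/
noncomputable def toExpLC (m : MExp A ℕ →₀ ℕ) : MExp A ℕ :=
  (m.support.toList.map (fun E => MExp.lact (m E) E)).foldr MExp.plus MExp.empty

/-- The monadic derivative over the `LinComb(ℕ)` support, w.r.t. a symbol. -/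
noncomputable def dLC [DecidableEq A] (a : A) : MExp A ℕ → (MExp A ℕ →₀ ℕ)
  | .sym b => if a = b then Finsupp.single MExp.eps 1 else 0
  | .eps => 0
  | .empty => 0
  | .plus e₁ e₂ => dLC a e₁ + dLC a e₂
  | .times e₁ e₂ =>
      Finsupp.mapDomain (fun E => E.times e₂) (dLC a e₁) + e₁.null • dLC a e₂
  | .star e => Finsupp.mapDomain (fun E => E.times (MExp.star e)) (dLC a e)
  | .lact α e => α • dLC a e
  | .ract e α => Finsupp.mapDomain (fun E => E.ract α) (dLC a e)
  | .fn n f es => Finsupp.single (MExp.fn n f (fun i => toExpLC (dLC a (es i)))) 1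

/-- The derivative w.r.t. a word: `d_ε(E) = pure E`, `d_{a·v}(E) = d_a(E) >>= d_v`. -/
noncomputable def dLCW [DecidableEq A] : List A → MExp A ℕ → (MExp A ℕ →₀ ℕ)
  | [], E => Finsupp.single E 1
  | a :: v, E => (dLC a E).sum fun E' k => k • dLCW v E'

/-- `ExtDist(x₁,x₂,x₃) = max(x₁,x₂,x₃) − min(x₁,x₂,x₃)` (truncated subtraction on ℕ). -/
def extDist (x : Fin 3 → ℕ) : ℕ :=
  max (x 0) (max (x 1) (x 2)) - min (x 0) (min (x 1) (x 2))

open MExp in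
/-- `E = ExtDist(a*b* + b*a*, b*a*b*, a*b*a*)` over the alphabet `{a, b}`
(here `a = 0`, `b = 1` in `Fin 2`). -/
def Eex : MExp (Fin 2) ℕ :=
  fn 3 extDist
    ![plus (times (star (sym 0)) (star (sym 1))) (times (star (sym 1)) (star (sym 0))),
      times (star (sym 1)) (times (star (sym 0)) (star (sym 1))),
      times (star (sym 0)) (times (star (sym 1)) (star (sym 0)))]

open MExp in
/-- `ExtDist(a*b* + a*, a*b*, a*b*a* + n ⊙ a*)`, the expected derivated term of `E`
w.r.t. `aⁿ`. -/
def Dn (n : ℕ) : MExp (Fin 2) ℕ :=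
  fn 3 extDist
    ![plus (times (star (sym 0)) (star (sym 1))) (star (sym 0)),
      times (star (sym 0)) (star (sym 1)),
      plus (times (star (sym 0)) (times (star (sym 1)) (star (sym 0))))
        (lact n (star (sym 0)))]


open MExp Finsupp

section Lemmas
variable [DecidableEq A]

lemma dLC_foldr (a : A) (l : List (MExp A ℕ)) :
    dLC a (l.foldr MExp.plus MExp.empty) = (l.map (dLC a)).sum := by
  induction l with
  | nil => simp [dLC]
  | cons x xs ih => simp [dLC, ih]

lemma dLC_toExpLC (a : A) (m : MExp A ℕ →₀ ℕ) :
    dLC a (toExpLC m) = m.sum fun E k => k • dLC a E := by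
  rw [toExpLC, dLC_foldr, List.map_map]
  rw [Finsupp.sum, ← Finset.sum_map_toList]
  simp [Function.comp_def, dLC]

lemma series_foldr (l : List (MExp A ℕ)) (w : List A) :
    (l.foldr MExp.plus MExp.empty).series w = (l.map (fun E => E.series w)).sum := by
  induction l with
  | nil => simp [MExp.series]
  | cons x xs ih => simp [MExp.series, ih]

lemma toExpLC_series (m : MExp A ℕ →₀ ℕ) (w : List A) :
    (toExpLC m).series w = m.sum fun E k => k * E.series w := by
  rw [toExpLC, series_foldr, List.map_map]
  rw [Finsupp.sum, ← Finset.sum_map_toList]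
  simp [Function.comp_def, MExp.series]

lemma eps_times_series (e : MExp A ℕ) :
    (MExp.times MExp.eps e).series = e.series := by
  funext w
  rw [MExp.series]
  cases w with
  | nil => simp [cauchy, MExp.series]
  | cons x xs =>
      rw [cauchy]
      rw [Finset.sum_eq_single 0]
      · simp [MExp.series]
      · intro i _ hi
        simp [MExp.series, List.take_eq_nil_iff, hi]
      · simp

end Lemmas

section Core
open MExp Finsupp

local notation "A1" => MExp.times (MExp.times MExp.eps (MExp.star (MExp.sym 0)))
    (MExp.star (MExp.sym 1)) 
local notation "A2" => MExp.times MExp.eps (MExp.star (MExp.sym (0 : Fin 2)))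
local notation "A3" => MExp.times (MExp.times MExp.eps (MExp.star (MExp.sym 0)))
    (MExp.times (MExp.star (MExp.sym 1)) (MExp.star (MExp.sym (0 : Fin 2))))

noncomputable def Gn (n : ℕ) : MExp (Fin 2) ℕ :=
  fn 3 extDist
    ![toExpLC (Finsupp.single A1 1 + Finsupp.single A2 1),
      toExpLC (Finsupp.single A1 1),
      toExpLC (Finsupp.single A3 1 + Finsupp.single A2 n)]

lemma dLC_A2 : dLC (0 : Fin 2) A2 = Finsupp.single A2 1 := by
  simp [dLC, MExp.null]

lemma dLC_A1 : dLC (0 : Fin 2) A1 = Finsupp.single A1 1 := by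
  simp [dLC, MExp.null]

lemma dLC_A3 : dLC (0 : Fin 2) A3 = Finsupp.single A3 1 + Finsupp.single A2 1 := by
  simp [dLC, MExp.null]

lemma dLC_Eex : dLC (0 : Fin 2) Eex = Finsupp.single (Gn 1) 1 := by
  rw [Eex, dLC, Gn]
  congr 1
  congr 1
  funext i
  fin_cases i <;> simp [dLC, MExp.null]

lemma dLC_Gn (n : ℕ) : dLC (0 : Fin 2) (Gn n) = Finsupp.single (Gn (n + 1)) 1 := by
  rw [Gn, dLC, Gn]
  congr 1
  congr 1
  funext i
  fin_cases i <;>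
    simp [dLC_toExpLC, Finsupp.sum_add_index', Finsupp.sum_single_index, add_smul,
      dLC_A1, dLC_A2, dLC_A3, Finsupp.smul_single]
  congr 1
  abel

end Core

section Core2
open MExp Finsupp

lemma dLCW_Gn (k n : ℕ) :
    dLCW (List.replicate k 0) (Gn n) = Finsupp.single (Gn (n + k)) 1 := by
  induction k generalizing n with
  | zero => simp [dLCW]
  | succ k ih =>
      rw [List.replicate_succ, dLCW, dLC_Gn, Finsupp.sum_single_index] <;>
        simp [ih, Nat.add_assoc, Nat.add_comm 1 k]

lemma dLCW_Eex (n : ℕ) (h : 1 ≤ n) :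
    dLCW (List.replicate n 0) Eex = Finsupp.single (Gn n) 1 := by
  obtain ⟨k, rfl⟩ : ∃ k, n = k + 1 := ⟨n - 1, by omega⟩
  rw [List.replicate_succ, dLCW, dLC_Eex, Finsupp.sum_single_index] <;>
    simp [dLCW_Gn, Nat.add_comm 1 k]

lemma A2_series : (MExp.times MExp.eps (MExp.star (MExp.sym (0:Fin 2)))).series
    = (MExp.star (MExp.sym (0:Fin 2))).series := eps_times_series _

lemma A1_series :
    (MExp.times (MExp.times MExp.eps (MExp.star (MExp.sym 0))) (MExp.star (MExp.sym 1))
      : MExp (Fin 2) ℕ).series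
    = (MExp.times (MExp.star (MExp.sym 0)) (MExp.star (MExp.sym 1))).series := by
  funext w
  show cauchy (MExp.times MExp.eps (MExp.star (MExp.sym 0))).series
      (MExp.star (MExp.sym 1)).series w = _
  rw [A2_series]
  rfl

lemma A3_series :
    (MExp.times (MExp.times MExp.eps (MExp.star (MExp.sym 0)))
      (MExp.times (MExp.star (MExp.sym 1)) (MExp.star (MExp.sym 0))) : MExp (Fin 2) ℕ).series
    = (MExp.times (MExp.star (MExp.sym 0))
        (MExp.times (MExp.star (MExp.sym 1)) (MExp.star (MExp.sym 0)))).series := by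
  funext w
  show cauchy (MExp.times MExp.eps (MExp.star (MExp.sym 0))).series
      (MExp.times (MExp.star (MExp.sym 1)) (MExp.star (MExp.sym 0))).series w = _
  rw [A2_series]
  rfl

lemma toExpLC_series_pair (E1 E2 : MExp (Fin 2) ℕ) (k1 k2 : ℕ) (w : List (Fin 2)) :
    (toExpLC (Finsupp.single E1 k1 + Finsupp.single E2 k2)).series w
      = k1 * E1.series w + k2 * E2.series w := by
  rw [toExpLC_series, Finsupp.sum_add_index' (by simp) (fun _ a b => add_mul a b _),
      Finsupp.sum_single_index (by simp), Finsupp.sum_single_index (by simp)]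

lemma toExpLC_series_single (E1 : MExp (Fin 2) ℕ) (k1 : ℕ) (w : List (Fin 2)) :
    (toExpLC (Finsupp.single E1 k1)).series w = k1 * E1.series w := by
  rw [toExpLC_series, Finsupp.sum_single_index (by simp)]

lemma Gn_series (n : ℕ) (w : List (Fin 2)) : (Gn n).series w = (Dn n).series w := by
  rw [Gn, Dn, MExp.series, MExp.series]
  congr 1
  funext i
  fin_cases i
  · show (toExpLC _).series w = (MExp.plus _ _).series w
    rw [toExpLC_series_pair, A1_series, A2_series, MExp.series]
    simp [MExp.series]
  · show (toExpLC _).series w = _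
    rw [toExpLC_series_single, A1_series]
    simp
  · show (toExpLC _).series w = (MExp.plus _ _).series w
    rw [toExpLC_series_pair, A3_series, A2_series, MExp.series]
    simp [MExp.series]

end Core2

section Final
open MExp Finsupp

lemma Dn_series_nil (n : ℕ) (h : 1 ≤ n) : (Dn n).series [] = n := by
  simp only [Dn, MExp.series, extDist]
  norm_num [MExp.series, cauchy, starSeries, Matrix.cons_val_zero, Matrix.cons_val_one,
    Matrix.cons_val_two, Matrix.tail_cons, Matrix.head_cons]
  omega

lemma main_series (n : ℕ) (h : 1 ≤ n) (w : List (Fin 2)) :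
    (toExpLC (dLCW (List.replicate n 0) Eex)).series w = (Dn n).series w := by
  rw [dLCW_Eex n h, toExpLC_series_single, one_mul, Gn_series]

end Final

/-- For `E = ExtDist(a*b* + b*a*, b*a*b*, a*b*a*)` over the `LinComb(ℕ)` support, for
every `n ≥ 1` the derivated term w.r.t. `aⁿ` denotes the same ℕ-series as
`ExtDist(a*b* + a*, a*b*, a*b*a* + n ⊙ a*)`; these are pairwise distinct (their denoted
ℕ-series differ), hence the set of (series of) derivated terms of `E` is infinite. -/
theorem derivated_terms_infinite :
    (∀ n : ℕ, 1 ≤ n → ∀ w : List (Fin 2),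
      (toExpLC (dLCW (List.replicate n 0) Eex)).series w = (Dn n).series w) ∧
    (∀ m n : ℕ, 1 ≤ m → 1 ≤ n → m ≠ n →
      (fun w => (toExpLC (dLCW (List.replicate m 0) Eex)).series w)
        ≠ (fun w => (toExpLC (dLCW (List.replicate n 0) Eex)).series w)) ∧
    Set.Infinite
      {S : List (Fin 2) → ℕ |
        ∃ w : List (Fin 2), S = fun w' => (toExpLC (dLCW w Eex)).series w'} := by
  have key : ∀ m n : ℕ, 1 ≤ m → 1 ≤ n →
      (fun w => (toExpLC (dLCW (List.replicate m 0) Eex)).series w)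
        = (fun w => (toExpLC (dLCW (List.replicate n 0) Eex)).series w) → m = n := by
    intro m n hm hn hEq
    have h2 := congrFun hEq []
    rw [main_series m hm, main_series n hn, Dn_series_nil m hm, Dn_series_nil n hn] at h2
    exact h2
  refine ⟨main_series, fun m n hm hn hmn hEq => hmn (key m n hm hn hEq), ?_⟩
  apply Set.infinite_of_injective_forall_mem
    (f := fun n : ℕ => fun w' => (toExpLC (dLCW (List.replicate (n + 1) 0) Eex)).series w')
  · intro m n h
    have := key (m + 1) (n + 1) (by omega) (by omega) h
    omega
  · intro n
    exact ⟨List.replicate (n + 1) 0, rfl⟩
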